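/- Let G₁ and G₂ be disjoint graphs, v₁ ∈ V(G₁), v₂ ∈ V(G₂), and let G be the graph obtained from their disjoint union by adding the single edge {v₁, v₂}. Then det(A(G)) = det(A(G₁))·det(A(G₂)) - det(A(G₁ \ v₁))·det(A(G₂ \ v₂)). In particular, G is singular if and only if det(G₁)det(G₂) = det(G₁ \ v₁)det(G₂ \ v₂). -/

import Mathlib

open scoped Classical

/-- Determinant of the adjacency matrix of the subgraph of `G` induced on `s`. -/
noncomputable def inducedDet {V : Type} [Fintype V] (G : SimpleGraph V) (s : Finset V) : ℝ :=
  Matrix.det (Matrix.of fun i j : {x // x ∈ s} => if G.Adj i j then (1 : ℝ) else 0)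

section Aux

variable {V : Type} [Fintype V] [DecidableEq V]

/-- The equivalence between a disjoint union decomposition and the whole type. -/
def sumPartEquiv (A B : Finset V) (hU : A ∪ B = Finset.univ) (hI : A ∩ B = ∅) :
    ({x // x ∈ A} ⊕ {x // x ∈ B}) ≃ V where
  toFun := Sum.elim Subtype.val Subtype.val
  invFun v := if h : v ∈ A then Sum.inl ⟨v, h⟩ else
    Sum.inr ⟨v, (Finset.mem_union.mp (hU ▸ Finset.mem_univ v)).resolve_left h⟩
  left_inv := by
    rintro (⟨a, ha⟩ | ⟨b, hb⟩)
    · simp [ha]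
    · have hb' : b ∉ A := fun hb' => by
        have : b ∈ A ∩ B := Finset.mem_inter.mpr ⟨hb', hb⟩
        simp [hI] at this
      simp [hb']
  right_inv := by
    intro v
    by_cases h : v ∈ A <;> simp [h]

/-- Determinant of a matrix that is block lower triangular with respect to a partition. -/
lemma det_split (N : Matrix V V ℝ) (A B : Finset V)
    (hU : A ∪ B = Finset.univ) (hI : A ∩ B = ∅)
    (hAB : ∀ i ∈ A, ∀ j ∈ B, N i j = 0) :
    N.det = Matrix.det (Matrix.of fun i j : {x // x ∈ A} => N i j) *
      Matrix.det (Matrix.of fun i j : {x // x ∈ B} => N i j) := by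
  rw [← Matrix.det_submatrix_equiv_self (sumPartEquiv A B hU hI) N]
  have hblock : N.submatrix (sumPartEquiv A B hU hI) (sumPartEquiv A B hU hI) =
      Matrix.fromBlocks (Matrix.of fun i j : {x // x ∈ A} => N i j) 0
        (Matrix.of fun (i : {x // x ∈ B}) (j : {x // x ∈ A}) => N i j)
        (Matrix.of fun i j : {x // x ∈ B} => N i j) := by
    ext i j
    rcases i with i | i <;> rcases j with j | j <;>
      simp only [Matrix.submatrix_apply, sumPartEquiv, Equiv.coe_fn_mk, Sum.elim_inl,
        Sum.elim_inr, Matrix.fromBlocks_apply₁₁, Matrix.fromBlocks_apply₁₂,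
        Matrix.fromBlocks_apply₂₁, Matrix.fromBlocks_apply₂₂, Matrix.of_apply,
        Matrix.zero_apply]
    exact hAB i i.2 j j.2
  rw [hblock, Matrix.det_fromBlocks_zero₁₂]

/-- The equivalence `(s.erase v) ⊕ Unit ≃ s`. -/
def eraseSumEquiv (s : Finset V) (v : V) (hv : v ∈ s) :
    ({x // x ∈ s.erase v} ⊕ Unit) ≃ {x // x ∈ s} where
  toFun := Sum.elim (fun x => ⟨x.1, Finset.mem_of_mem_erase x.2⟩) (fun _ => ⟨v, hv⟩)
  invFun a := if h : (a : V) = v then Sum.inr () else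
    Sum.inl ⟨a.1, Finset.mem_erase.mpr ⟨h, a.2⟩⟩
  left_inv := by
    rintro (⟨a, ha⟩ | ⟨⟩)
    · simp [(Finset.mem_erase.mp ha).1]
    · simp
  right_inv := by
    rintro ⟨a, ha⟩
    by_cases h : a = v
    · subst h; simp
    · simp [h]

/-- Cofactor reduction: if column `v` of `N` restricted to `s` is the standard basis vector
at `v`, then the determinant over `s` equals the determinant over `s.erase v`. -/
lemma det_erase (N : Matrix V V ℝ) (s : Finset V) (v : V) (hv : v ∈ s)
    (h : ∀ i ∈ s, N i v = if i = v then 1 else 0) :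
    Matrix.det (Matrix.of fun i j : {x // x ∈ s} => N i j) =
      Matrix.det (Matrix.of fun i j : {x // x ∈ s.erase v} => N i j) := by
  rw [← Matrix.det_submatrix_equiv_self (eraseSumEquiv s v hv)]
  have hblock : (Matrix.of fun i j : {x // x ∈ s} => N i j).submatrix
        (eraseSumEquiv s v hv) (eraseSumEquiv s v hv) =
      Matrix.fromBlocks (Matrix.of fun i j : {x // x ∈ s.erase v} => N i j) 0
        (Matrix.of fun (_ : Unit) (j : {x // x ∈ s.erase v}) => N v j) 1 := by
    ext i j
    rcases i with i | i <;> rcases j with j | j <;>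
      simp only [Matrix.submatrix_apply, eraseSumEquiv, Equiv.coe_fn_mk, Sum.elim_inl,
        Sum.elim_inr, Matrix.fromBlocks_apply₁₁, Matrix.fromBlocks_apply₁₂,
        Matrix.fromBlocks_apply₂₁, Matrix.fromBlocks_apply₂₂, Matrix.of_apply,
        Matrix.zero_apply, Matrix.one_apply_eq]
    · rw [h i.1 (Finset.mem_of_mem_erase i.2), if_neg (Finset.mem_erase.mp i.2).1]
    · rw [h v hv, if_pos rfl]
  rw [hblock, Matrix.det_fromBlocks_zero₁₂, Matrix.det_one, mul_one]

end Aux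

set_option maxHeartbeats 1600000 in
/-- If `G` is obtained from the disjoint graphs induced on `A` and `B` by adding the single
bridge `{v₁, v₂}`, then
`det G = det G₁ · det G₂ − det (G₁ \ v₁) · det (G₂ \ v₂)`;
in particular `G` is singular iff `det G₁ · det G₂ = det (G₁ \ v₁) · det (G₂ \ v₂)`. -/
theorem stmt_14 {V : Type} [Fintype V] [DecidableEq V] (G : SimpleGraph V)
    (v₁ v₂ : V) (A B : Finset V)
    (hU : A ∪ B = Finset.univ) (hI : A ∩ B = ∅)
    (hv₁ : v₁ ∈ A) (hv₂ : v₂ ∈ B)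
    (hbridge : G.Adj v₁ v₂)
    (hsep : ∀ a ∈ A, ∀ b ∈ B, G.Adj a b → a = v₁ ∧ b = v₂) :
    inducedDet G Finset.univ =
        inducedDet G A * inducedDet G B -
          inducedDet G (A.erase v₁) * inducedDet G (B.erase v₂) ∧
      (inducedDet G Finset.univ = 0 ↔
        inducedDet G A * inducedDet G B =
          inducedDet G (A.erase v₁) * inducedDet G (B.erase v₂)) := by
  set M : Matrix V V ℝ := Matrix.of fun i j => if G.Adj i j then (1 : ℝ) else 0 with hM
  have hind : ∀ s : Finset V,
      inducedDet G s = Matrix.det (Matrix.of fun i j : {x // x ∈ s} => M i j) := by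
    intro s
    unfold inducedDet
    congr 1
  have hsymm : ∀ i j, M i j = M j i := by
    intro i j; simp only [hM, Matrix.of_apply, SimpleGraph.adj_comm]
  have hnB : ∀ x ∈ A, x ∉ B := fun x hx hx' => by
    have : x ∈ A ∩ B := Finset.mem_inter.mpr ⟨hx, hx'⟩
    simp [hI] at this
  have hnA : ∀ x ∈ B, x ∉ A := fun x hx hx' => hnB x hx' hx
  have hmem : ∀ x, x ∉ A → x ∈ B := fun x hx =>
    (Finset.mem_union.mp (hU ▸ Finset.mem_univ x)).resolve_left hx
  have hAne₂ : ∀ x ∈ A, x ≠ v₂ := fun x hx h => hnB x hx (by rw [h]; exact hv₂)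
  have hBne₁ : ∀ x ∈ B, x ≠ v₁ := fun x hx h => hnA x hx (by rw [h]; exact hv₁)
  have hne : v₁ ≠ v₂ := hAne₂ v₁ hv₁
  have hU' : B ∪ A = Finset.univ := by rw [Finset.union_comm]; exact hU
  have hI' : B ∩ A = ∅ := by rw [Finset.inter_comm]; exact hI
  have hAB0 : ∀ i ∈ A, ∀ j ∈ B, ¬(i = v₁ ∧ j = v₂) → M i j = 0 := by
    intro i hi j hj hij
    simp only [hM, Matrix.of_apply, ite_eq_right_iff]
    intro hadj; exact absurd (hsep i hi j hj hadj) hij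
  have hBA0 : ∀ i ∈ B, ∀ j ∈ A, ¬(j = v₁ ∧ i = v₂) → M i j = 0 := fun i hi j hj h => by
    rw [hsymm]; exact hAB0 j hj i hi h
  have hM12 : M v₁ v₂ = 1 := by simp [hM, hbridge]
  have hM21 : M v₂ v₁ = 1 := by rw [hsymm]; exact hM12
  -- the columns without the bridge entries
  set c₂ : V → ℝ := fun i => if i ∈ B then M i v₂ else 0 with hc₂
  set c₁ : V → ℝ := fun i => if i ∈ A then M i v₁ else 0 with hc₁
  have hcol₂ : (fun i => M i v₂) = c₂ + Pi.single v₁ 1 := by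
    funext i
    simp only [hc₂, Pi.add_apply, Pi.single_apply]
    by_cases hiA : i ∈ A
    · rw [if_neg (hnB i hiA)]
      by_cases hiv : i = v₁
      · subst hiv; rw [if_pos rfl, hM12, zero_add]
      · rw [if_neg hiv, hAB0 i hiA v₂ hv₂ (fun h => hiv h.1), add_zero]
    · have hiB := hmem i hiA
      have hiv : i ≠ v₁ := fun h => hiA (by rw [h]; exact hv₁)
      rw [if_pos hiB, if_neg hiv, add_zero]
  have hcol₁ : (fun i => M i v₁) = c₁ + Pi.single v₂ 1 := by
    funext i
    simp only [hc₁, Pi.add_apply, Pi.single_apply]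
    by_cases hiA : i ∈ A
    · rw [if_pos hiA, if_neg (hAne₂ i hiA), add_zero]
    · have hiB := hmem i hiA
      rw [if_neg hiA]
      by_cases hiv : i = v₂
      · subst hiv; rw [if_pos rfl, hM21, zero_add]
      · rw [if_neg hiv, hBA0 i hiB v₁ hv₁ (fun h => hiv h.2), add_zero]
  set N : Matrix V V ℝ := M.updateCol v₂ c₂ with hN
  set R : Matrix V V ℝ := M.updateCol v₂ (Pi.single v₁ 1) with hR
  have hdM : M.det = N.det + R.det := by
    conv_lhs => rw [← Matrix.updateCol_eq_self M v₂, hcol₂]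
    rw [Matrix.det_updateCol_add]
  -- entry formulas
  have hNe : ∀ i j, N i j = if j = v₂ then c₂ i else M i j := fun i j => by
    rw [hN, Matrix.updateCol_apply]
  have hRe : ∀ i j, R i j = if j = v₂ then (Pi.single v₁ 1 : V → ℝ) i else M i j := fun i j => by
    rw [hR, Matrix.updateCol_apply]
  set M₀ : Matrix V V ℝ := N.updateCol v₁ c₁ with hM₀
  set Q : Matrix V V ℝ := N.updateCol v₁ (Pi.single v₂ 1) with hQ
  have hM₀e : ∀ i j, M₀ i j = if j = v₁ then c₁ i else N i j := fun i j => by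
    rw [hM₀, Matrix.updateCol_apply]
  have hQe : ∀ i j, Q i j = if j = v₁ then (Pi.single v₂ 1 : V → ℝ) i else N i j := fun i j => by
    rw [hQ, Matrix.updateCol_apply]
  have hcolN₁ : (fun i => N i v₁) = c₁ + Pi.single v₂ 1 := by
    funext i
    rw [hNe i v₁, if_neg hne]
    exact congrFun hcol₁ i
  have hdN : N.det = M₀.det + Q.det := by
    conv_lhs => rw [← Matrix.updateCol_eq_self N v₁, hcolN₁]
    rw [Matrix.det_updateCol_add]
  -- determinant of the block diagonal part
  have hM₀det : M₀.det = inducedDet G A * inducedDet G B := by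
    have hcross : ∀ i ∈ A, ∀ j ∈ B, M₀ i j = 0 := by
      intro i hi j hj
      rw [hM₀e, if_neg (hBne₁ j hj), hNe]
      by_cases hj2 : j = v₂
      · rw [if_pos hj2, hc₂]
        simp [hnB i hi]
      · rw [if_neg hj2]; exact hAB0 i hi j hj (fun h => hj2 h.2)
    rw [det_split M₀ A B hU hI hcross, hind A, hind B]
    congr 1
    · congr 1; ext i j
      simp only [Matrix.of_apply]
      rw [hM₀e, hNe, if_neg (hAne₂ j.1 j.2)]
      by_cases hj : (j : V) = v₁
      · rw [if_pos hj, hc₁]; simp [hj, i.2]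
      · rw [if_neg hj]
    · congr 1; ext i j
      simp only [Matrix.of_apply]
      rw [hM₀e, if_neg (hBne₁ j.1 j.2), hNe]
      by_cases hj : (j : V) = v₂
      · rw [if_pos hj, hc₂]; simp [hj, i.2]
      · rw [if_neg hj]
  -- Q has a zero column inside the A-block
  have hQdet : Q.det = 0 := by
    have hcross : ∀ i ∈ A, ∀ j ∈ B, Q i j = 0 := by
      intro i hi j hj
      rw [hQe, if_neg (hBne₁ j hj), hNe]
      by_cases hj2 : j = v₂
      · rw [if_pos hj2, hc₂]; simp [hnB i hi]
      · rw [if_neg hj2]; exact hAB0 i hi j hj (fun h => hj2 h.2)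
    rw [det_split Q A B hU hI hcross]
    have hz : Matrix.det (Matrix.of fun i j : {x // x ∈ A} => Q i j) = 0 := by
      apply Matrix.det_eq_zero_of_column_eq_zero ⟨v₁, hv₁⟩
      intro i
      show Q i.1 v₁ = 0
      rw [hQe, if_pos rfl, Pi.single_apply, if_neg (hAne₂ i.1 i.2)]
    rw [hz, zero_mul]
  -- split R along column v₁
  set R₁ : Matrix V V ℝ := R.updateCol v₁ c₁ with hR₁
  set R₂ : Matrix V V ℝ := R.updateCol v₁ (Pi.single v₂ 1) with hR₂
  have hR₁e : ∀ i j, R₁ i j = if j = v₁ then c₁ i else R i j := fun i j => by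
    rw [hR₁, Matrix.updateCol_apply]
  have hR₂e : ∀ i j, R₂ i j = if j = v₁ then (Pi.single v₂ 1 : V → ℝ) i else R i j := fun i j => by
    rw [hR₂, Matrix.updateCol_apply]
  have hcolR₁ : (fun i => R i v₁) = c₁ + Pi.single v₂ 1 := by
    funext i
    rw [hRe i v₁, if_neg hne]
    exact congrFun hcol₁ i
  have hdR : R.det = R₁.det + R₂.det := by
    conv_lhs => rw [← Matrix.updateCol_eq_self R v₁, hcolR₁]
    rw [Matrix.det_updateCol_add]
  have hR₁det : R₁.det = 0 := by
    have hcross : ∀ i ∈ B, ∀ j ∈ A, R₁ i j = 0 := by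
      intro i hi j hj
      by_cases hj1 : j = v₁
      · rw [hR₁e, if_pos hj1, hc₁]; simp [hnA i hi]
      · rw [hR₁e, if_neg hj1, hRe, if_neg (hAne₂ j hj)]
        exact hBA0 i hi j hj (fun h => hj1 h.1)
    rw [det_split R₁ B A hU' hI' hcross]
    have hz : Matrix.det (Matrix.of fun i j : {x // x ∈ B} => R₁ i j) = 0 := by
      apply Matrix.det_eq_zero_of_column_eq_zero ⟨v₂, hv₂⟩
      intro i
      show R₁ i.1 v₂ = 0
      rw [hR₁e, if_neg hne.symm, hRe, if_pos rfl, Pi.single_apply,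
        if_neg (hBne₁ i.1 i.2)]
    rw [hz, zero_mul]
  -- the crossing term: swap the two bridge columns
  set S : Matrix V V ℝ := R₂.submatrix id (Equiv.swap v₁ v₂) with hS
  have hSe : ∀ i j, S i j =
      if j = v₁ then (if i = v₁ then (1 : ℝ) else 0)
      else if j = v₂ then (if i = v₂ then (1 : ℝ) else 0)
      else M i j := by
    intro i j
    rw [hS]
    show R₂ i (Equiv.swap v₁ v₂ j) = _
    by_cases hj1 : j = v₁
    · subst hj1
      rw [Equiv.swap_apply_left, hR₂e, if_neg hne.symm, hRe, if_pos rfl]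
      rw [if_pos rfl, Pi.single_apply]
    · by_cases hj2 : j = v₂
      · subst hj2
        rw [Equiv.swap_apply_right, hR₂e, if_pos rfl, if_neg hne.symm, if_pos rfl,
          Pi.single_apply]
      · rw [Equiv.swap_apply_of_ne_of_ne hj1 hj2, hR₂e, if_neg hj1, hRe, if_neg hj2,
          if_neg hj1, if_neg hj2]
  have hR₂det : R₂.det = -S.det := by
    have h := Matrix.det_permute' (Equiv.swap v₁ v₂) R₂
    rw [Equiv.Perm.sign_swap hne] at h
    rw [← hS] at h
    simp only [Units.coe_neg_one, Int.cast_neg, Int.cast_one, neg_mul, one_mul] at h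
    rw [h, neg_neg]
  have hSdet : S.det = inducedDet G (A.erase v₁) * inducedDet G (B.erase v₂) := by
    have hcross : ∀ i ∈ A, ∀ j ∈ B, S i j = 0 := by
      intro i hi j hj
      rw [hSe, if_neg (hBne₁ j hj)]
      by_cases hj2 : j = v₂
      · rw [if_pos hj2, if_neg (hAne₂ i hi)]
      · rw [if_neg hj2]; exact hAB0 i hi j hj (fun h => hj2 h.2)
    rw [det_split S A B hU hI hcross]
    have hSA : Matrix.det (Matrix.of fun i j : {x // x ∈ A} => S i j) =
        inducedDet G (A.erase v₁) := by
      rw [det_erase S A v₁ hv₁ (fun i _ => by rw [hSe, if_pos rfl]), hind (A.erase v₁)]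
      congr 1; ext i j
      simp only [Matrix.of_apply]
      have hj1 : (j : V) ≠ v₁ := (Finset.mem_erase.mp j.2).1
      have hj2 : (j : V) ≠ v₂ := hAne₂ j.1 (Finset.mem_of_mem_erase j.2)
      rw [hSe, if_neg hj1, if_neg hj2]
    have hSB : Matrix.det (Matrix.of fun i j : {x // x ∈ B} => S i j) =
        inducedDet G (B.erase v₂) := by
      have hcol : ∀ i ∈ B, S i v₂ = if i = v₂ then 1 else 0 := fun i _ => by
        rw [hSe, if_neg hne.symm, if_pos rfl]
      rw [det_erase S B v₂ hv₂ hcol, hind (B.erase v₂)]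
      congr 1; ext i j
      simp only [Matrix.of_apply]
      have hj2 : (j : V) ≠ v₂ := (Finset.mem_erase.mp j.2).1
      have hj1 : (j : V) ≠ v₁ := hBne₁ j.1 (Finset.mem_of_mem_erase j.2)
      rw [hSe, if_neg hj1, if_neg hj2]
    rw [hSA, hSB]
  -- put everything together
  have huniv : inducedDet G Finset.univ = M.det := by
    rw [hind Finset.univ]
    have h := Matrix.det_submatrix_equiv_self
      (Equiv.subtypeUnivEquiv fun x : V => Finset.mem_univ x) M
    convert h using 2
    rfl
  have main : inducedDet G Finset.univ =
      inducedDet G A * inducedDet G B -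
        inducedDet G (A.erase v₁) * inducedDet G (B.erase v₂) := by
    rw [huniv, hdM, hdN, hdR, hM₀det, hQdet, hR₁det, hR₂det, hSdet]
    ring
  refine ⟨main, ?_⟩
  rw [main]
  exact sub_eq_zero
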